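/- Let n, d ≥ 2 and let (S, A) be a partial 2-(n^d, n, 1)-design such that for every block ℓ ∈ A and every point P ∉ ℓ there are at most (n^d − 1)/(n − 1) − n blocks of A containing P and disjoint from ℓ. If Q is a point of valency (n^d − 1)/(n − 1) − 1, then any two points A, B each of which is unjoined to Q are unjoined to each other. -/
import Mathlib


open Finset

/-- The valency of a point `X`: the number of blocks of `B` containing `X`. -/
def valency {α : Type*} [DecidableEq α] (B : Finset (Finset α)) (X : α) : ℕ :=
  (B.filter (fun L => X ∈ L)).card

/-- in a partial 2-(n^d, n, 1)-design in which, for every block ℓ and point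
P ∉ ℓ, at most (n^d-1)/(n-1) - n blocks through P are disjoint from ℓ, any two points
unjoined to a point Q of valency (n^d-1)/(n-1) - 1 are unjoined to each other. -/
theorem stmt_0 {α : Type*} [DecidableEq α] (n d : ℕ) (hn : 2 ≤ n) (hd : 2 ≤ d)
    (S : Finset α) (A : Finset (Finset α))
    (hS : S.card = n ^ d)
    (hblocks : ∀ L ∈ A, L ⊆ S ∧ L.card = n)
    (hdesign : ∀ P ∈ S, ∀ Q ∈ S, P ≠ Q → (A.filter (fun L => P ∈ L ∧ Q ∈ L)).card ≤ 1)
    (hpar : ∀ ℓ ∈ A, ∀ P ∈ S, P ∉ ℓ →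
      (A.filter (fun M => P ∈ M ∧ M ∩ ℓ = ∅)).card ≤ (n ^ d - 1) / (n - 1) - n)
    (Q : α) (hQ : Q ∈ S)
    (hval : valency A Q = (n ^ d - 1) / (n - 1) - 1)
    (X : α) (hX : X ∈ S) (Y : α) (hY : Y ∈ S) (hXY : X ≠ Y)
    (hXQ : ¬ ∃ L ∈ A, X ∈ L ∧ Q ∈ L) (hYQ : ¬ ∃ L ∈ A, Y ∈ L ∧ Q ∈ L) :
    ¬ ∃ L ∈ A, X ∈ L ∧ Y ∈ L := by
  rintro ⟨L, hLA, hXL, hYL⟩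
  set r := (n ^ d - 1) / (n - 1) with hrdef
  -- r ≥ n + 1
  have hr : n + 1 ≤ r := by
    rw [hrdef, Nat.le_div_iff_mul_le (by omega)]
    have h2 : n * n ≤ n ^ d := by
      calc n * n = n ^ 2 := (sq n).symm
        _ ≤ n ^ d := Nat.pow_le_pow_right (by omega) hd
    have h1 : 1 ≤ n ^ d := Nat.one_le_pow _ _ (by omega)
    zify [h1, show 1 ≤ n by omega]
    push_cast
    nlinarith
  -- Q ∉ L
  have hQL : Q ∉ L := fun h => hXQ ⟨L, hLA, hXL, h⟩
  -- blocks through Q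
  set T := A.filter (fun M => Q ∈ M) with hTdef
  have hT : T.card = r - 1 := hval
  set D := T.filter (fun M => M ∩ L = ∅) with hDdef
  set E := T.filter (fun M => ¬ M ∩ L = ∅) with hEdef
  have hsplit : D.card + E.card = T.card := Finset.card_filter_add_card_filter_not _
  have hDsub : D ⊆ A.filter (fun M => Q ∈ M ∧ M ∩ L = ∅) := by
    intro M hM
    simp only [hDdef, hTdef, Finset.mem_filter] at hM ⊢
    tauto
  have hD : D.card ≤ r - n := le_trans (Finset.card_le_card hDsub) (hpar L hLA Q hQ hQL)
  have hE : n - 1 ≤ E.card := by omega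
  -- map each block of E to its intersection point with L
  have hEpt : ∀ M ∈ E, (M ∩ L).Nonempty := by
    intro M hM
    simp only [hEdef, Finset.mem_filter] at hM
    exact Finset.nonempty_iff_ne_empty.mpr hM.2
  set f : Finset α → α := fun M => if h : (M ∩ L).Nonempty then h.choose else X with hfdef
  have hfmem : ∀ M ∈ E, f M ∈ M ∩ L := by
    intro M hM
    have h := hEpt M hM
    simp only [hfdef, dif_pos h]
    exact h.choose_spec
  have hEA : ∀ M ∈ E, M ∈ A ∧ Q ∈ M := by
    intro M hM
    simp only [hEdef, hTdef, Finset.mem_filter] at hM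
    exact ⟨hM.1.1, hM.1.2⟩
  have hmaps : ∀ M ∈ E, f M ∈ (L.erase X).erase Y := by
    intro M hM
    have hp := hfmem M hM
    rw [Finset.mem_inter] at hp
    obtain ⟨hMA, hQM⟩ := hEA M hM
    have hne1 : f M ≠ X := fun h => hXQ ⟨M, hMA, h ▸ hp.1, hQM⟩
    have hne2 : f M ≠ Y := fun h => hYQ ⟨M, hMA, h ▸ hp.1, hQM⟩
    exact Finset.mem_erase.mpr ⟨hne2, Finset.mem_erase.mpr ⟨hne1, hp.2⟩⟩
  have hinj : Set.InjOn f E := by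
    intro M₁ hM₁ M₂ hM₂ heq
    simp only [Finset.coe_mem, Finset.mem_coe] at hM₁ hM₂
    obtain ⟨hM₁A, hQM₁⟩ := hEA M₁ hM₁
    obtain ⟨hM₂A, hQM₂⟩ := hEA M₂ hM₂
    have hp₁ := Finset.mem_inter.mp (hfmem M₁ hM₁)
    have hp₂ := Finset.mem_inter.mp (hfmem M₂ hM₂)
    have hpS : f M₁ ∈ S := (hblocks L hLA).1 hp₁.2
    have hpQ : Q ≠ f M₁ := fun h => hQL (h ▸ hp₁.2)
    have hcard := hdesign Q hQ (f M₁) hpS hpQ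
    have h₁ : M₁ ∈ A.filter (fun M => Q ∈ M ∧ f M₁ ∈ M) :=
      Finset.mem_filter.mpr ⟨hM₁A, hQM₁, hp₁.1⟩
    have h₂ : M₂ ∈ A.filter (fun M => Q ∈ M ∧ f M₁ ∈ M) :=
      Finset.mem_filter.mpr ⟨hM₂A, hQM₂, heq ▸ hp₂.1⟩
    exact Finset.card_le_one.mp hcard M₁ h₁ M₂ h₂
  have hle : E.card ≤ ((L.erase X).erase Y).card :=
    Finset.card_le_card_of_injOn f hmaps hinj
  have hYX : Y ∈ L.erase X := Finset.mem_erase.mpr ⟨hXY.symm, hYL⟩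
  have hcardE : ((L.erase X).erase Y).card = n - 2 := by
    rw [Finset.card_erase_of_mem hYX, Finset.card_erase_of_mem hXL, (hblocks L hLA).2]; omega
  omega
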